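/- Let k be a field of characteristic p > 0 and p ≤ m ≤ 2p−2. Let e be the operator on the (m+1)-dimensional space V_m with basis v_0,…,v_m defined by e·v_i = (i+1)v_{i+1} for i < m and e·v_m = 0. Then e^p = 0 and the Jordan type of e is [p] + [m+1−p], i.e., e has exactly two Jordan blocks, of sizes p and m+1−p. -/
import Mathlib


/-- The operator `e` on the `(m+1)`-dimensional space `V_m` with basis
`v_0, …, v_m`, defined by `e ⬝ v_i = (i+1) v_{i+1}` for `i < m` and
`e ⬝ v_m = 0`.  In coordinates, the `v_i`-component of `e ⬝ w` is `i · w_{i−1}`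
(which vanishes for `i = 0`). -/
def eOp (k : Type*) [Field k] (m : ℕ) : Module.End k (Fin (m + 1) → k) where
  toFun w := fun i => ((i : ℕ) : k) * w ⟨(i : ℕ) - 1, by have := i.isLt; omega⟩
  map_add' a b := by funext i; simp; ring
  map_smul' c a := by funext i; simp; ring

lemma eOp_pow_apply {k : Type*} [Field k] (m : ℕ) (j : ℕ) (w : Fin (m+1) → k) (i : Fin (m+1)) :
    (eOp k m ^ j) w i =
      (∏ t ∈ Finset.range j, (((i : ℕ) - t : ℕ) : k)) *
        w ⟨(i : ℕ) - j, by have := i.isLt; omega⟩ := by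
  induction j generalizing w with
  | zero => simp
  | succ j ih =>
    rw [pow_succ, Module.End.mul_apply, ih]
    have : eOp k m w ⟨(i : ℕ) - j, by have := i.isLt; omega⟩ =
        (((i : ℕ) - j : ℕ) : k) * w ⟨(i : ℕ) - (j+1), by have := i.isLt; omega⟩ := by
      show (((i : ℕ) - j : ℕ) : k) * w ⟨(i:ℕ) - j - 1, _⟩ = _
      simp only [Nat.sub_sub]
    rw [this, Finset.prod_range_succ]
    ring

lemma c_zero_iff {k : Type*} [Field k] {p : ℕ} [Fact p.Prime] [CharP k p]
    {m : ℕ} (hm2 : m ≤ 2 * p - 2) (i j : ℕ) (hi : i ≤ m) :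
    (∏ t ∈ Finset.range j, ((i - t : ℕ) : k)) = 0 ↔ (i < j ∨ (p ≤ i ∧ i - p < j)) := by
  have hp2 : 2 ≤ p := (Fact.out : p.Prime).two_le
  rw [Finset.prod_eq_zero_iff]
  constructor
  · rintro ⟨t, ht, h0⟩
    rw [Finset.mem_range] at ht
    obtain ⟨c, hc⟩ := (CharP.cast_eq_zero_iff k p _).mp h0
    have hc2 : c < 2 := by
      by_contra h
      push_neg at h
      have : p * 2 ≤ p * c := Nat.mul_le_mul_left p h
      omega
    interval_cases c <;> omega
  · rintro (h | ⟨h1, h2⟩)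
    · exact ⟨i, Finset.mem_range.mpr h, by simp [Nat.sub_eq_zero_of_le (le_of_lt h)]⟩
    · refine ⟨i - p, Finset.mem_range.mpr h2, ?_⟩
      have : i - (i - p) = p := by omega
      rw [this]
      exact CharP.cast_eq_zero k p

/-- For `p ≤ m ≤ 2p−2`, `e^p = 0` and the Jordan type of `e` is
`[p] + [m+1−p]`, encoded by the dimensions of the kernels of all powers of
`e`: two Jordan blocks, of sizes `p` and `m+1−p`. -/
theorem stmt16 {k : Type*} [Field k] {p : ℕ} [Fact p.Prime] [CharP k p]
    (m : ℕ) (hm1 : p ≤ m) (hm2 : m ≤ 2 * p - 2) :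
    eOp k m ^ p = 0 ∧
      ∀ j : ℕ, Module.finrank k ↥(LinearMap.ker (eOp k m ^ j)) =
        min j p + min j (m + 1 - p) := by
  have hp2 : 2 ≤ p := (Fact.out : p.Prime).two_le
  constructor
  · apply LinearMap.ext
    intro w
    funext i
    rw [eOp_pow_apply]
    have hc : (∏ t ∈ Finset.range p, (((i:ℕ) - t : ℕ) : k)) = 0 :=
      (c_zero_iff hm2 (i:ℕ) p (by have := i.isLt; omega)).mpr (by have := i.isLt; omega)
    simp [hc]
  · intro j
    classical
    set S : Finset (Fin (m+1)) := Finset.univ.filter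
      (fun l : Fin (m+1) => (l:ℕ) + j ≤ m ∧ (p ≤ (l:ℕ) ∨ (l:ℕ) + j < p)) with hS
    have hker : LinearMap.ker (eOp k m ^ j) =
        LinearMap.ker (LinearMap.funLeft k k
          (fun s : {x : Fin (m+1) // x ∈ S} => (s : Fin (m+1)))) := by
      ext w
      simp only [LinearMap.mem_ker, LinearMap.funLeft]
      constructor
      · intro hw
        show (fun s : {x : Fin (m+1) // x ∈ S} => w s) = 0
        funext s
        obtain ⟨l, hl⟩ := s
        rw [hS, Finset.mem_filter] at hl
        have h1 : (l:ℕ) + j ≤ m := hl.2.1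
        have key := congrFun hw (⟨(l:ℕ) + j, by omega⟩ : Fin (m+1))
        rw [eOp_pow_apply] at key
        simp only [Pi.zero_apply] at key
        have hnc : ¬ ((l:ℕ)+j < j ∨ (p ≤ (l:ℕ)+j ∧ (l:ℕ)+j - p < j)) := by
          rcases hl.2.2 with h | h <;> omega
        have hc : (∏ t ∈ Finset.range j, ((((l:ℕ)+j) - t : ℕ) : k)) ≠ 0 :=
          fun h0 => hnc ((c_zero_iff hm2 _ _ (by omega)).mp h0)
        have hw0 : w ⟨(l:ℕ) + j - j, by omega⟩ = 0 := by
          rcases mul_eq_zero.mp key with h | h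
          · exact absurd h hc
          · exact h
        have heq : (⟨(l:ℕ) + j - j, by omega⟩ : Fin (m+1)) = l := by
          apply Fin.ext
          show (l:ℕ) + j - j = (l:ℕ)
          omega
        rw [heq] at hw0
        exact hw0
      · intro hw
        funext i
        rw [eOp_pow_apply]
        by_cases hc : (∏ t ∈ Finset.range j, (((i:ℕ) - t : ℕ) : k)) = 0
        · simp [hc]
        · have hnc : ¬ ((i:ℕ) < j ∨ (p ≤ (i:ℕ) ∧ (i:ℕ) - p < j)) :=
            fun h => hc ((c_zero_iff hm2 (i:ℕ) j (by have := i.isLt; omega)).mpr h)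
          have := i.isLt
          have hmem : (⟨(i:ℕ) - j, by omega⟩ : Fin (m+1)) ∈ S := by
            rw [hS, Finset.mem_filter]
            exact ⟨Finset.mem_univ _, by show (i:ℕ) - j + j ≤ m; omega,
              by show p ≤ (i:ℕ) - j ∨ (i:ℕ) - j + j < p; omega⟩
          have h0 := congrFun hw (⟨⟨(i:ℕ) - j, by omega⟩, hmem⟩ : {x : Fin (m+1) // x ∈ S})
          simp only [Pi.zero_apply] at h0
          show _ * w ⟨(i:ℕ) - j, _⟩ = 0
          rw [show w (⟨(i:ℕ) - j, by omega⟩ : Fin (m+1)) = 0 from h0]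
          simp
    rw [hker]
    have hsurj : Function.Surjective (LinearMap.funLeft k k
        (fun s : {x : Fin (m+1) // x ∈ S} => (s : Fin (m+1)))) :=
      LinearMap.funLeft_surjective_of_injective k k _ Subtype.val_injective
    have hrn := LinearMap.finrank_range_add_finrank_ker (LinearMap.funLeft k k
        (fun s : {x : Fin (m+1) // x ∈ S} => (s : Fin (m+1))))
    rw [LinearMap.range_eq_top.mpr hsurj, finrank_top] at hrn
    have hd1 : Module.finrank k (Fin (m+1) → k) = m + 1 := by
      simp [Module.finrank_pi]
    have hd2 : Module.finrank k ({x : Fin (m+1) // x ∈ S} → k) = S.card := by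
      simp [Module.finrank_pi, Fintype.card_coe]
    rw [hd1, hd2] at hrn
    have hcard : S.card = (p - j) + (m + 1 - j - p) := by
      have himg : S.card = ((Finset.range (m+1)).filter
          (fun l => l + j ≤ m ∧ (p ≤ l ∨ l + j < p))).card := by
        apply Finset.card_bij (fun (a : Fin (m+1)) _ => (a : ℕ))
        · intro a ha
          rw [hS, Finset.mem_filter] at ha
          rw [Finset.mem_filter, Finset.mem_range]
          exact ⟨a.isLt, ha.2⟩
        · intro a _ b _ h
          exact Fin.ext h
        · intro b hb
          rw [Finset.mem_filter, Finset.mem_range] at hb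
          exact ⟨⟨b, hb.1⟩, by rw [hS, Finset.mem_filter]; exact ⟨Finset.mem_univ _, hb.2⟩, rfl⟩
      rw [himg]
      have hsplit : (Finset.range (m+1)).filter (fun l => l + j ≤ m ∧ (p ≤ l ∨ l + j < p)) =
          Finset.range (p - j) ∪ Finset.Ico p (m + 1 - j) := by
        ext l
        simp only [Finset.mem_filter, Finset.mem_range, Finset.mem_union, Finset.mem_Ico]
        omega
      have hdisj : Disjoint (Finset.range (p - j)) (Finset.Ico p (m + 1 - j)) := by
        rw [Finset.disjoint_left]
        intro a ha hb
        rw [Finset.mem_range] at ha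
        rw [Finset.mem_Ico] at hb
        omega
      rw [hsplit, Finset.card_union_of_disjoint hdisj, Finset.card_range, Nat.card_Ico]
    omega
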